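/- Let V : ℝ → ℝ be C¹ and let (φ, y, ρ, H) be a solution of the coupled scalar field system on an interval I containing t₀ (without assuming the constraint). If 3H(t₀)² = (1/2)y(t₀)² + V(φ(t₀)) + ρ(t₀), then 3H(t)² = (1/2)y(t)² + V(φ(t)) + ρ(t) for every t ∈ I; i.e., the Friedmann constraint, once satisfied at an initial time, is preserved by the evolution equations. -/

import Mathlib

open Real Filter Set Topology

/-- The coupled scalar field system: `φ' = y`, `y' = -3Hy - V'(φ) + α(φ)ρ`,
`ρ' = -ρ(3γH + α(φ)y)`, `H' = -(1/2)y² - (γ/2)ρ` on the set `s`. -/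
def ScalarFieldSystem (γ : ℝ) (V α φ y ρ H : ℝ → ℝ) (s : Set ℝ) : Prop :=
  ∀ t ∈ s,
    HasDerivAt φ (y t) t ∧
    HasDerivAt y (-3 * H t * y t - deriv V (φ t) + α (φ t) * ρ t) t ∧
    HasDerivAt ρ (-(ρ t) * (3 * γ * H t + α (φ t) * y t)) t ∧
    HasDerivAt H (-(1/2) * (y t)^2 - (γ/2) * ρ t) t

/-- the Friedmann constraint `3H² = (1/2)y² + V(φ) + ρ`, once satisfied
at an initial time `t₀ ∈ I`, is preserved throughout the evolution on the interval `I`. -/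
theorem constraint_preserved (γ t₀ : ℝ) (V α φ y ρ H : ℝ → ℝ) (I : Set ℝ)
    (hI : I.OrdConnected) (ht₀ : t₀ ∈ I)
    (hV : ContDiff ℝ 1 V)
    (hsol : ScalarFieldSystem γ V α φ y ρ H I)
    (hcon₀ : 3 * (H t₀)^2 = (1/2) * (y t₀)^2 + V (φ t₀) + ρ t₀) :
    ∀ t ∈ I, 3 * (H t)^2 = (1/2) * (y t)^2 + V (φ t) + ρ t := by
  intro t ht
  set F : ℝ → ℝ := fun s => 3 * (H s)^2 - ((1/2) * (y s)^2 + V (φ s) + ρ s) with hF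
  have hderiv : ∀ s ∈ I, HasDerivAt F 0 s := by
    intro s hs
    obtain ⟨hφ, hy, hρ, hH⟩ := hsol s hs
    have hVφ : HasDerivAt (fun u => V (φ u)) (deriv V (φ s) * y s) s :=
      ((hV.differentiable one_ne_zero (φ s)).hasDerivAt).comp s hφ
    have h : HasDerivAt F _ s := (((hH.pow 2).const_mul 3).sub
        ((((hy.pow 2).const_mul (1/2)).add hVφ).add hρ))
    convert h using 1
    push_cast
    ring
  have hconv : Convex ℝ I := hI.convex
  have key : ‖F t - F t₀‖ ≤ 0 * ‖t - t₀‖ :=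
    hconv.norm_image_sub_le_of_norm_hasDerivWithin_le
      (f' := fun _ => 0)
      (fun x hx => (hderiv x hx).hasDerivWithinAt)
      (fun x _ => by simp) ht₀ ht
  have hF0 : F t = F t₀ := by
    rw [zero_mul] at key
    have := norm_nonneg (F t - F t₀)
    have : F t - F t₀ = 0 := by
      have := le_antisymm key (norm_nonneg _)
      simpa [norm_eq_zero] using this
    linarith
  have : F t₀ = 0 := by simp [hF]; linarith
  have : F t = 0 := by rw [hF0, this]
  simp only [hF] at this
  linarith
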